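/- Let J and J' be the Lie algebra complex structures on ℝ⁶ defined respectively by the data (A, B=−1, ε=1) and (A', B'=−1, ε=1) in the structure equations dω¹ = A ω¹∧ω³ − ω¹∧ω̄³, dω² = −A ω²∧ω³ + ω²∧ω̄³, dω³ = 0. If there is a Lie algebra automorphism F with J = F⁻¹∘J'∘F, then A = A'. -/

import Mathlib

lemma span3_aux {M : Type*} [AddCommGroup M] [Module ℂ M] {a b c x : M}
    (h : x ∈ Submodule.span ℂ ({a, b, c} : Set M)) :
    ∃ p q r : ℂ, x = p • a + q • b + r • c := by
  rw [Submodule.mem_span_insert] at h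
  obtain ⟨p, z, hz, rfl⟩ := h
  rw [Submodule.mem_span_insert] at hz
  obtain ⟨q, z', hz', rfl⟩ := hz
  rw [Submodule.mem_span_singleton] at hz'
  obtain ⟨r, rfl⟩ := hz'
  exact ⟨p, q, r, by abel⟩
/-- On the (complexified) Nakamura Lie algebra, consider two complex
structures of splitting type given by the data `(A, B = −1, ε = 1)` and
`(A', B' = −1, ε = 1)`, i.e. with bases `Z₁,Z₂,Z₃,Z̄₁,Z̄₂,Z̄₃` (resp. primed) dual to
coframes satisfying `dω¹ = A ω¹∧ω³ − ω¹∧ω̄³`, `dω² = −A ω²∧ω³ + ω²∧ω̄³`, `dω³ = 0`.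
If a Lie algebra automorphism `F` (ℂ-linear extension of a real automorphism, i.e.
commuting with the conjugation `σ`) carries the (1,0)-space `span(Z₁,Z₂,Z₃)` of `J`
onto the (1,0)-space `span(Z₁',Z₂',Z₃')` of `J'` (that is, `J = F⁻¹∘J'∘F`),
then `A = A'`. Here `|A| ≠ 1`, `|A'| ≠ 1`. -/
theorem stmt14 {g : Type*} [LieRing g] [LieAlgebra ℂ g]
    (A A' : ℂ) (hA : ‖A‖ ≠ 1) (hA' : ‖A'‖ ≠ 1)
    (σ : g → g)
    (hσadd : ∀ x y : g, σ (x + y) = σ x + σ y)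
    (hσsmul : ∀ (c : ℂ) (x : g), σ (c • x) = (starRingEnd ℂ) c • σ x)
    (hσinv : ∀ x : g, σ (σ x) = x)
    (hσbr : ∀ x y : g, σ ⁅x, y⁆ = ⁅σ x, σ y⁆)
    (b b' : Module.Basis (Fin 6) ℂ g)
    (hσb : σ (b 0) = b 3 ∧ σ (b 1) = b 4 ∧ σ (b 2) = b 5)
    (hσb' : σ (b' 0) = b' 3 ∧ σ (b' 1) = b' 4 ∧ σ (b' 2) = b' 5)
    -- brackets encoding the structure equations with parameter A
    (hb02 : ⁅b 0, b 2⁆ = -A • b 0) (hb05 : ⁅b 0, b 5⁆ = b 0)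
    (hb12 : ⁅b 1, b 2⁆ = A • b 1) (hb15 : ⁅b 1, b 5⁆ = -b 1)
    (hb35 : ⁅b 3, b 5⁆ = -(starRingEnd ℂ) A • b 3) (hb32 : ⁅b 3, b 2⁆ = b 3)
    (hb45 : ⁅b 4, b 5⁆ = (starRingEnd ℂ) A • b 4) (hb42 : ⁅b 4, b 2⁆ = -b 4)
    (hb25 : ⁅b 2, b 5⁆ = 0)
    (hbrest : ∀ i j : Fin 6, i ≠ 2 → i ≠ 5 → j ≠ 2 → j ≠ 5 → ⁅b i, b j⁆ = 0)
    -- brackets encoding the structure equations with parameter A'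
    (hb02' : ⁅b' 0, b' 2⁆ = -A' • b' 0) (hb05' : ⁅b' 0, b' 5⁆ = b' 0)
    (hb12' : ⁅b' 1, b' 2⁆ = A' • b' 1) (hb15' : ⁅b' 1, b' 5⁆ = -b' 1)
    (hb35' : ⁅b' 3, b' 5⁆ = -(starRingEnd ℂ) A' • b' 3) (hb32' : ⁅b' 3, b' 2⁆ = b' 3)
    (hb45' : ⁅b' 4, b' 5⁆ = (starRingEnd ℂ) A' • b' 4) (hb42' : ⁅b' 4, b' 2⁆ = -b' 4)
    (hb25' : ⁅b' 2, b' 5⁆ = 0)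
    (hbrest' : ∀ i j : Fin 6, i ≠ 2 → i ≠ 5 → j ≠ 2 → j ≠ 5 → ⁅b' i, b' j⁆ = 0)
    -- the automorphism realizing the equivalence of the complex structures
    (F : g ≃ₗ[ℂ] g)
    (hFbr : ∀ x y : g, F ⁅x, y⁆ = ⁅F x, F y⁆)
    (hFσ : ∀ x : g, F (σ x) = σ (F x))
    (hF10 : Submodule.map (F : g →ₗ[ℂ] g) (Submodule.span ℂ ({b 0, b 1, b 2} : Set g))
      = Submodule.span ℂ ({b' 0, b' 1, b' 2} : Set g)) :
    A = A' := by
  classical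
  have hmem0 : F (b 0) ∈ Submodule.span ℂ ({b' 0, b' 1, b' 2} : Set g) := by
    rw [← hF10]
    exact Submodule.mem_map_of_mem (Submodule.subset_span (by simp))
  have hmem2 : F (b 2) ∈ Submodule.span ℂ ({b' 0, b' 1, b' 2} : Set g) := by
    rw [← hF10]
    exact Submodule.mem_map_of_mem (Submodule.subset_span (by simp))
  obtain ⟨s, t, w, hFb0⟩ := span3_aux hmem0
  obtain ⟨p, q, r, hFb2⟩ := span3_aux hmem2
  have hFb5 : F (b 5) = (starRingEnd ℂ) p • b' 3 + (starRingEnd ℂ) q • b' 4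
      + (starRingEnd ℂ) r • b' 5 := by
    have h5 : F (b 5) = σ (F (b 2)) := by rw [← hFσ, hσb.2.2]
    rw [h5, hFb2, hσadd, hσadd, hσsmul, hσsmul, hσsmul, hσb'.1, hσb'.2.1, hσb'.2.2]
  -- auxiliary brackets
  have h03 : ⁅b' 0, b' 3⁆ = 0 := hbrest' 0 3 (by decide) (by decide) (by decide) (by decide)
  have h04 : ⁅b' 0, b' 4⁆ = 0 := hbrest' 0 4 (by decide) (by decide) (by decide) (by decide)
  have h13 : ⁅b' 1, b' 3⁆ = 0 := hbrest' 1 3 (by decide) (by decide) (by decide) (by decide)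
  have h14 : ⁅b' 1, b' 4⁆ = 0 := hbrest' 1 4 (by decide) (by decide) (by decide) (by decide)
  have h01 : ⁅b' 0, b' 1⁆ = 0 := hbrest' 0 1 (by decide) (by decide) (by decide) (by decide)
  have h10 : ⁅b' 1, b' 0⁆ = 0 := hbrest' 1 0 (by decide) (by decide) (by decide) (by decide)
  have h23 : ⁅b' 2, b' 3⁆ = -b' 3 := by rw [← lie_skew, hb32']
  have h24 : ⁅b' 2, b' 4⁆ = b' 4 := by rw [← lie_skew, hb42']; simp
  have h20 : ⁅b' 2, b' 0⁆ = A' • b' 0 := by rw [← lie_skew, hb02']; simp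
  have h21 : ⁅b' 2, b' 1⁆ = -(A' • b' 1) := by rw [← lie_skew, hb12']
  -- equation from ⁅b0, b5⁆ = b0
  have e1 : ⁅F (b 0), F (b 5)⁆ = F (b 0) := by rw [← hFbr, hb05]
  rw [hFb0, hFb5] at e1
  simp only [lie_add, add_lie, lie_smul, smul_lie, h03, h04, h13, h14, h23, h24,
    hb05', hb15', hb25', smul_zero, add_zero, zero_add, smul_smul, smul_neg] at e1
  have c1_2 := congrArg (fun z => (b'.repr z) 2) e1
  have c1_0 := congrArg (fun z => (b'.repr z) 0) e1
  have c1_1 := congrArg (fun z => (b'.repr z) 1) e1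
  simp [Finsupp.single_apply] at c1_2 c1_0 c1_1
  -- equation from ⁅b0, b2⁆ = -A • b0
  have e2 : ⁅F (b 0), F (b 2)⁆ = (-A) • F (b 0) := by
    rw [← hFbr, hb02, map_smul]
  rw [hFb0, hFb2] at e2
  simp only [lie_add, add_lie, lie_smul, smul_lie, h01, h10, h20, h21,
    hb02', hb12', lie_self, smul_zero, add_zero, zero_add, smul_smul, smul_neg,
    smul_add, neg_smul] at e2
  have c2_0 := congrArg (fun z => (b'.repr z) 0) e2
  have c2_1 := congrArg (fun z => (b'.repr z) 1) e2
  simp [Finsupp.single_apply] at c2_0 c2_1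
  have hw : w = 0 := c1_2.symm
  subst hw
  rcases eq_or_ne s 0 with hs | hs
  · rcases eq_or_ne t 0 with ht | ht
    · exfalso
      apply b.ne_zero 0
      apply F.injective
      rw [hFb0, hs, ht]
      simp
    · have hrc : (starRingEnd ℂ) r = -1 :=
        mul_right_cancel₀ ht (by linear_combination -c1_1)
      have hr : r = -1 := by
        have := congrArg (starRingEnd ℂ) hrc
        simpa using this
      refine mul_right_cancel₀ ht ?_
      rw [hr] at c2_1
      linear_combination c2_1
  · have hrc : (starRingEnd ℂ) r = 1 :=
      mul_right_cancel₀ hs (by linear_combination c1_0)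
    have hr : r = 1 := by
      have := congrArg (starRingEnd ℂ) hrc
      simpa using this
    refine mul_right_cancel₀ hs ?_
    rw [hr] at c2_0
    linear_combination c2_0
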